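/- There exist δ₀ > 0 and a measurable function F : ℝ^d → ℝ with ∫_{ℝ^d} F(y)² L(y,θ*) dy < ∞ such that the following holds for every δ ∈ (0, δ₀] and every θ ∈ ℝ^d: if g₀ ∈ G is any minimizer of g ↦ ‖gθ − θ*‖ over G, and v = H̄(g₀θ − θ*), w = (I − H̄)(g₀θ − θ*) satisfy ‖v‖² + ‖w‖⁴ ≤ δ², then |log L(y,θ) − log L(y,θ*)| ≤ δ·F(y) for all y ∈ ℝ^d. -/

import Mathlib

open MeasureTheory
open scoped BigOperators RealInnerProductSpace

noncomputable section

abbrev Euc (d : ℕ) := EuclideanSpace ℝ (Fin d)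
abbrev Iso (d : ℕ) := Euc d ≃ₗᵢ[ℝ] Euc d

/-- The average `H̄ = (1/|H|) ∑_{h∈H} h` of a finite subgroup of linear isometries. -/
def groupAvg {d : ℕ} (H : Subgroup (Iso d)) [Fintype H] : Euc d →ₗ[ℝ] Euc d :=
  (Fintype.card H : ℝ)⁻¹ • ∑ h : H, ((h : Iso d).toLinearEquiv : Euc d →ₗ[ℝ] Euc d)

/-- The density `L(y,θ)` of the Gaussian mixture `P_θ = (1/|G|) ∑_{g∈G} N(gθ, I_d)`
with respect to Lebesgue measure on `ℝ^d`. -/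
def density {d : ℕ} (G : Subgroup (Iso d)) [Fintype G] (y θ : Euc d) : ℝ :=
  (1 / ((Fintype.card G : ℝ) * (2 * Real.pi) ^ ((d : ℝ) / 2))) *
    ∑ g : G, Real.exp (-‖y - (g : Iso d) θ‖ ^ 2 / 2)

/-- The population log-likelihood `Ψ(θ) = ∫ log L(y,θ) · L(y,θ*) dy`. -/
def popLogLik {d : ℕ} (G : Subgroup (Iso d)) [Fintype G] (θstar θ : Euc d) : ℝ :=
  ∫ y : Euc d, Real.log (density G y θ) * density G y θstar

/- ==================== auxiliary lemmas ==================== -/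

lemma exp_quad_bound (s M : ℝ) (hs : |s| ≤ M) :
    Real.exp s ≤ 1 + s + M ^ 2 * Real.exp M := by
  have hM : 0 ≤ M := le_trans (abs_nonneg s) hs
  have h1 : s ≤ M := le_trans (le_abs_self s) hs
  have h2 : -M ≤ s := neg_le_of_abs_le hs
  have heM : (1:ℝ) ≤ Real.exp M := Real.one_le_exp hM
  have hA : 0 < Real.exp s := Real.exp_pos s
  have hkey : (1 - s) * Real.exp s ≤ 1 := by
    have h3 : (-s) + 1 ≤ Real.exp (-s) := Real.add_one_le_exp (-s)
    have h4 : Real.exp (-s) * Real.exp s = 1 := by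
      rw [← Real.exp_add]; simp
    nlinarith
  have hsM : s ^ 2 ≤ M ^ 2 := sq_le_sq' (by linarith) h1
  rcases le_or_gt 0 s with h0 | h0
  · have hAe : Real.exp s ≤ Real.exp M := Real.exp_le_exp.mpr h1
    nlinarith [sq_nonneg s, mul_nonneg h0 hA.le]
  · have h5 : Real.exp s * (1 - s) ≤ 1 := by nlinarith
    have h6 : Real.exp s ≤ 1 + s + s ^ 2 := by nlinarith [sq_nonneg s, hA]
    nlinarith [sq_nonneg s]

lemma groupAvg_apply {d : ℕ} (H : Subgroup (Iso d)) [Fintype H] (x : Euc d) :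
    groupAvg H x = (Fintype.card H : ℝ)⁻¹ • ∑ h : H, (h : Iso d) x := by
  simp [groupAvg, LinearMap.sum_apply]

lemma mem_fix_groupAvg {d : ℕ} (H : Subgroup (Iso d)) [Fintype H] (a : H) (x : Euc d) :
    (a : Iso d) (groupAvg H x) = groupAvg H x := by
  rw [groupAvg_apply, _root_.map_smul, map_sum]
  congr 1
  exact Fintype.sum_equiv (Equiv.mulLeft a) _ _ (fun h => rfl)

lemma sum_w_eq_zero {d : ℕ} (H : Subgroup (Iso d)) [Fintype H] (u : Euc d) :
    ∑ h : H, (h : Iso d) (u - groupAvg H u) = 0 := by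
  have hcard : (0:ℝ) < (Fintype.card H : ℝ) := by
    have : Nonempty H := ⟨1⟩
    exact_mod_cast Fintype.card_pos
  have h1 : ∑ h : H, (h : Iso d) (u - groupAvg H u)
      = (∑ h : H, (h : Iso d) u) - (Fintype.card H : ℝ) • groupAvg H u := by
    simp only [map_sub, Finset.sum_sub_distrib]
    congr 1
    rw [Finset.sum_congr rfl (fun h _ => mem_fix_groupAvg H h u), Finset.sum_const,
      Finset.card_univ, ← Nat.cast_smul_eq_nsmul ℝ]
  rw [h1, groupAvg_apply, smul_smul, mul_inv_cancel₀ (ne_of_gt hcard), one_smul, sub_self]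

/-- the mixture sum, without the normalizing constant -/
def mixSum {d : ℕ} (G : Subgroup (Iso d)) [Fintype G] (y θ : Euc d) : ℝ :=
  ∑ g : G, Real.exp (-‖y - (g : Iso d) θ‖ ^ 2 / 2)

lemma mixSum_pos {d : ℕ} (G : Subgroup (Iso d)) [Fintype G] (y θ : Euc d) :
    0 < mixSum G y θ := by
  have : Nonempty G := ⟨1⟩
  exact Finset.sum_pos (fun g _ => Real.exp_pos _) Finset.univ_nonempty

lemma mixSum_mul_inv {d : ℕ} (G : Subgroup (Iso d)) [Fintype G] (y θ : Euc d)
    (g₀ : Iso d) (hg₀ : g₀ ∈ G) : mixSum G y (g₀ θ) = mixSum G y θ := by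
  unfold mixSum
  exact Fintype.sum_equiv (Equiv.mulRight (⟨g₀, hg₀⟩ : G)) _ _ (fun g => rfl)

lemma log_density_sub {d : ℕ} (G : Subgroup (Iso d)) [Fintype G] (y θ θ' : Euc d) :
    Real.log (density G y θ) - Real.log (density G y θ') =
      Real.log (mixSum G y θ) - Real.log (mixSum G y θ') := by
  have : Nonempty G := ⟨1⟩
  have hc : 0 < (1 / ((Fintype.card G : ℝ) * (2 * Real.pi) ^ ((d : ℝ) / 2))) := by
    have h1 : (0:ℝ) < Fintype.card G := by exact_mod_cast Fintype.card_pos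
    have h2 : (0:ℝ) < (2 * Real.pi) ^ ((d : ℝ) / 2) :=
      Real.rpow_pos_of_pos (by positivity) _
    positivity
  have hrw : ∀ ψ : Euc d, Real.log (density G y ψ)
      = Real.log (1 / ((Fintype.card G : ℝ) * (2 * Real.pi) ^ ((d : ℝ) / 2)))
        + Real.log (mixSum G y ψ) := fun ψ =>
    Real.log_mul (ne_of_gt hc) (ne_of_gt (mixSum_pos G y ψ))
  rw [hrw θ, hrw θ']; ring

set_option maxHeartbeats 2000000 in
lemma key_est {d : ℕ} (G : Subgroup (Iso d)) [Fintype G] (H : Subgroup (Iso d)) [Fintype H]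
    (hHG : ∀ h : Iso d, h ∈ H → h ∈ G)
    (θstar : Euc d) (hfix : ∀ h : H, (h : Iso d) θstar = θstar)
    (v w : Euc d) (hvfix : ∀ h : H, (h : Iso d) v = v)
    (hwsum : ∑ h : H, (h : Iso d) w = 0)
    (δ : ℝ) (hδ0 : 0 < δ) (hδ1 : δ ≤ 1) (hv : ‖v‖ ≤ δ) (hw2 : ‖w‖ ^ 2 ≤ δ)
    (y : Euc d) :
    |Real.log (mixSum G y (θstar + v + w)) - Real.log (mixSum G y θstar)|
      ≤ δ * ((‖y‖ + ‖θstar‖) + 2 + (‖y‖ + ‖θstar‖) ^ 2 * Real.exp (‖y‖ + ‖θstar‖)) := by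
  classical
  have hmnat : Nonempty H := ⟨1⟩
  set C : ℝ := ‖θstar‖ with hCdef
  have hC0 : 0 ≤ C := norm_nonneg _
  set m : ℝ := (Fintype.card H : ℝ) with hmdef
  have hm : 0 < m := by
    have h := Fintype.card_pos (α := H)
    rw [hmdef]; exact_mod_cast h
  set θ' : Euc d := θstar + v + w with hθ'
  set M : ℝ := (‖y‖ + C) * ‖w‖ with hMdef
  set B₁ : ℝ := (‖y‖ + C) * δ + 2 * δ with hB₁def
  have hyC0 : 0 ≤ ‖y‖ + C := by positivity
  have hw1 : ‖w‖ ≤ 1 := by nlinarith [norm_nonneg w]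
  have hM0 : 0 ≤ M := by positivity
  have hB₁0 : 0 ≤ B₁ := by positivity
  set b : G → ℝ := fun g =>
    ⟪y - (g : Iso d) θstar, (g : Iso d) v⟫ - (‖v‖ ^ 2 + 2 * ⟪v, w⟫ + ‖w‖ ^ 2) / 2 with hbdef
  set s : G → H → ℝ := fun g h =>
    ⟪y - (g : Iso d) θstar, (g : Iso d) ((h : Iso d) w)⟫ with hsdef
  -- pointwise factorization
  have hpoint : ∀ (g : G) (h : H),
      Real.exp (-‖y - (g : Iso d) ((h : Iso d) θ')‖ ^ 2 / 2)
        = Real.exp (-‖y - (g : Iso d) θstar‖ ^ 2 / 2) * Real.exp (b g) * Real.exp (s g h) := by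
    intro g h
    have e1 : (h : Iso d) θ' = θstar + (v + (h : Iso d) w) := by
      rw [hθ', map_add, map_add, hfix h, hvfix h, add_assoc]
    have e2 : y - (g : Iso d) (θstar + (v + (h : Iso d) w))
        = (y - (g : Iso d) θstar) - (g : Iso d) (v + (h : Iso d) w) := by
      rw [map_add]; abel
    have e5 : ⟪v, (h : Iso d) w⟫ = ⟪v, w⟫ := by
      conv_lhs => rw [← hvfix h]
      exact (h : Iso d).inner_map_map v w
    have e3 : ‖(y - (g : Iso d) θstar) - (g : Iso d) (v + (h : Iso d) w)‖ ^ 2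
        = ‖y - (g : Iso d) θstar‖ ^ 2
          - 2 * (⟪y - (g : Iso d) θstar, (g : Iso d) v⟫
              + ⟪y - (g : Iso d) θstar, (g : Iso d) ((h : Iso d) w)⟫)
          + (‖v‖ ^ 2 + 2 * ⟪v, w⟫ + ‖w‖ ^ 2) := by
      rw [norm_sub_sq_real, (g : Iso d).norm_map, norm_add_sq_real, e5,
        (h : Iso d).norm_map, map_add, inner_add_right]
    rw [e1, e2, ← Real.exp_add, ← Real.exp_add]
    congr 1
    rw [e3]
    simp only [hbdef, hsdef]
    ring
  -- double sum identity
  have hreindex : ∀ h : H, mixSum G y θ'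
      = ∑ g : G, Real.exp (-‖y - (g : Iso d) ((h : Iso d) θ')‖ ^ 2 / 2) := by
    intro h
    exact (mixSum_mul_inv G y θ' ((h : Iso d)) (hHG _ h.2)).symm
  have hdouble : m * mixSum G y θ'
      = ∑ g : G, Real.exp (-‖y - (g : Iso d) θstar‖ ^ 2 / 2) * Real.exp (b g)
          * ∑ h : H, Real.exp (s g h) := by
    have h1 : m * mixSum G y θ'
        = ∑ h : H, ∑ g : G, Real.exp (-‖y - (g : Iso d) ((h : Iso d) θ')‖ ^ 2 / 2) := by
      rw [Finset.sum_congr rfl (fun h _ => (hreindex h).symm), Finset.sum_const,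
        Finset.card_univ, nsmul_eq_mul, hmdef]
    rw [h1, Finset.sum_comm]
    refine Finset.sum_congr rfl (fun g _ => ?_)
    rw [Finset.mul_sum]
    exact Finset.sum_congr rfl (fun h _ => hpoint g h)
  -- bounds
  have hnormx : ∀ g : G, ‖y - (g : Iso d) θstar‖ ≤ ‖y‖ + C := by
    intro g
    calc ‖y - (g : Iso d) θstar‖ ≤ ‖y‖ + ‖(g : Iso d) θstar‖ := norm_sub_le _ _
    _ = ‖y‖ + C := by rw [(g : Iso d).norm_map]
  have hs_bound : ∀ (g : G) (h : H), |s g h| ≤ M := by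
    intro g h
    calc |s g h| ≤ ‖y - (g : Iso d) θstar‖ * ‖(g : Iso d) ((h : Iso d) w)‖ :=
          abs_real_inner_le_norm _ _
    _ = ‖y - (g : Iso d) θstar‖ * ‖w‖ := by rw [(g : Iso d).norm_map, (h : Iso d).norm_map]
    _ ≤ (‖y‖ + C) * ‖w‖ := mul_le_mul_of_nonneg_right (hnormx g) (norm_nonneg w)
  have hb_bound : ∀ g : G, |b g| ≤ B₁ := by
    intro g
    have h1 : |⟪y - (g : Iso d) θstar, (g : Iso d) v⟫| ≤ (‖y‖ + C) * δ := by
      calc |⟪y - (g : Iso d) θstar, (g : Iso d) v⟫|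
          ≤ ‖y - (g : Iso d) θstar‖ * ‖(g : Iso d) v‖ := abs_real_inner_le_norm _ _
      _ = ‖y - (g : Iso d) θstar‖ * ‖v‖ := by rw [(g : Iso d).norm_map]
      _ ≤ (‖y‖ + C) * δ := mul_le_mul (hnormx g) hv (norm_nonneg v) hyC0
    have h2 : |⟪v, w⟫| ≤ δ := by
      calc |⟪v, w⟫| ≤ ‖v‖ * ‖w‖ := abs_real_inner_le_norm v w
      _ ≤ δ * 1 := mul_le_mul hv hw1 (norm_nonneg w) hδ0.le
      _ = δ := mul_one δ
    have h3 : ‖v‖ ^ 2 ≤ δ := by nlinarith [norm_nonneg v]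
    obtain ⟨h4a, h4b⟩ := abs_le.mp h1
    obtain ⟨h5a, h5b⟩ := abs_le.mp h2
    have h6a : (0:ℝ) ≤ ‖v‖ ^ 2 := sq_nonneg _
    have h6b : (0:ℝ) ≤ ‖w‖ ^ 2 := sq_nonneg _
    have hδδ : δ * δ ≤ δ := by nlinarith
    rw [abs_le]
    simp only [hbdef]
    constructor
    · rw [hB₁def]; linarith
    · rw [hB₁def]; linarith
  have hsz : ∀ g : G, ∑ h : H, s g h = 0 := by
    intro g
    simp only [hsdef]
    rw [← inner_sum, ← map_sum, hwsum, map_zero, inner_zero_right]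
  have hsum_low : ∀ g : G, m ≤ ∑ h : H, Real.exp (s g h) := by
    intro g
    have : ∑ h : H, (s g h + 1) ≤ ∑ h : H, Real.exp (s g h) :=
      Finset.sum_le_sum (fun h _ => Real.add_one_le_exp (s g h))
    rwa [Finset.sum_add_distrib, hsz g, Finset.sum_const, Finset.card_univ, zero_add,
      nsmul_eq_mul, mul_one] at this
  have hsum_up : ∀ g : G, ∑ h : H, Real.exp (s g h) ≤ m * (1 + M ^ 2 * Real.exp M) := by
    intro g
    have : ∑ h : H, Real.exp (s g h) ≤ ∑ h : H, (1 + s g h + M ^ 2 * Real.exp M) :=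
      Finset.sum_le_sum (fun h _ => exp_quad_bound _ _ (hs_bound g h))
    calc ∑ h : H, Real.exp (s g h) ≤ ∑ h : H, (1 + s g h + M ^ 2 * Real.exp M) := this
    _ = m * (1 + M ^ 2 * Real.exp M) := by
        rw [Finset.sum_add_distrib, Finset.sum_add_distrib, hsz g, Finset.sum_const,
          Finset.sum_const, Finset.card_univ, nsmul_eq_mul, nsmul_eq_mul, mul_one]
        ring
  -- upper bound for the mixture sum
  have hSpos := mixSum_pos G y θstar
  have hS'pos := mixSum_pos G y θ'
  have hexpb : ∀ g : G, Real.exp (b g) ≤ Real.exp B₁ := fun g =>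
    Real.exp_le_exp.mpr (le_trans (le_abs_self _) (hb_bound g))
  have hexpb' : ∀ g : G, Real.exp (-B₁) ≤ Real.exp (b g) := fun g =>
    Real.exp_le_exp.mpr (neg_le_of_abs_le (hb_bound g))
  have hup : m * mixSum G y θ'
      ≤ Real.exp B₁ * (1 + M ^ 2 * Real.exp M) * (m * mixSum G y θstar) := by
    rw [hdouble]
    have hterm : ∀ g : G,
        Real.exp (-‖y - (g : Iso d) θstar‖ ^ 2 / 2) * Real.exp (b g)
            * ∑ h : H, Real.exp (s g h)
        ≤ Real.exp B₁ * (1 + M ^ 2 * Real.exp M) * m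
            * Real.exp (-‖y - (g : Iso d) θstar‖ ^ 2 / 2) := by
      intro g
      have e0 : (0:ℝ) < Real.exp (-‖y - (g : Iso d) θstar‖ ^ 2 / 2) := Real.exp_pos _
      have hM1 : (0:ℝ) ≤ 1 + M ^ 2 * Real.exp M := by positivity
      have := mul_le_mul (mul_le_mul_of_nonneg_left (hexpb g) e0.le)
        (hsum_up g) (Finset.sum_nonneg (fun h _ => (Real.exp_pos _).le))
        (by positivity)
      calc Real.exp (-‖y - (g : Iso d) θstar‖ ^ 2 / 2) * Real.exp (b g)
            * ∑ h : H, Real.exp (s g h)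
          ≤ Real.exp (-‖y - (g : Iso d) θstar‖ ^ 2 / 2) * Real.exp B₁
            * (m * (1 + M ^ 2 * Real.exp M)) := this
      _ = Real.exp B₁ * (1 + M ^ 2 * Real.exp M) * m
            * Real.exp (-‖y - (g : Iso d) θstar‖ ^ 2 / 2) := by ring
    calc (∑ g : G, Real.exp (-‖y - (g : Iso d) θstar‖ ^ 2 / 2) * Real.exp (b g)
          * ∑ h : H, Real.exp (s g h))
        ≤ ∑ g : G, Real.exp B₁ * (1 + M ^ 2 * Real.exp M) * m
            * Real.exp (-‖y - (g : Iso d) θstar‖ ^ 2 / 2) :=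
          Finset.sum_le_sum (fun g _ => hterm g)
    _ = Real.exp B₁ * (1 + M ^ 2 * Real.exp M) * (m * mixSum G y θstar) := by
        rw [← Finset.mul_sum, mixSum]; ring
  have hlow : Real.exp (-B₁) * (m * mixSum G y θstar) ≤ m * mixSum G y θ' := by
    rw [hdouble]
    have hterm : ∀ g : G,
        Real.exp (-B₁) * m * Real.exp (-‖y - (g : Iso d) θstar‖ ^ 2 / 2)
        ≤ Real.exp (-‖y - (g : Iso d) θstar‖ ^ 2 / 2) * Real.exp (b g)
            * ∑ h : H, Real.exp (s g h) := by
      intro g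
      have e0 : (0:ℝ) < Real.exp (-‖y - (g : Iso d) θstar‖ ^ 2 / 2) := Real.exp_pos _
      have := mul_le_mul (mul_le_mul_of_nonneg_left (hexpb' g) e0.le)
        (hsum_low g) hm.le (by positivity)
      calc Real.exp (-B₁) * m * Real.exp (-‖y - (g : Iso d) θstar‖ ^ 2 / 2)
          = Real.exp (-‖y - (g : Iso d) θstar‖ ^ 2 / 2) * Real.exp (-B₁) * m := by ring
      _ ≤ Real.exp (-‖y - (g : Iso d) θstar‖ ^ 2 / 2) * Real.exp (b g)
            * ∑ h : H, Real.exp (s g h) := this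
    calc Real.exp (-B₁) * (m * mixSum G y θstar)
        = ∑ g : G, Real.exp (-B₁) * m * Real.exp (-‖y - (g : Iso d) θstar‖ ^ 2 / 2) := by
          rw [← Finset.mul_sum, mixSum]; ring
    _ ≤ ∑ g : G, Real.exp (-‖y - (g : Iso d) θstar‖ ^ 2 / 2) * Real.exp (b g)
          * ∑ h : H, Real.exp (s g h) := Finset.sum_le_sum (fun g _ => hterm g)
  -- cancel m
  have hup' : mixSum G y θ' ≤ Real.exp B₁ * (1 + M ^ 2 * Real.exp M) * mixSum G y θstar := by
    have h := hup
    rw [show Real.exp B₁ * (1 + M ^ 2 * Real.exp M) * (m * mixSum G y θstar)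
        = m * (Real.exp B₁ * (1 + M ^ 2 * Real.exp M) * mixSum G y θstar) by ring] at h
    exact le_of_mul_le_mul_left h hm
  have hlow' : Real.exp (-B₁) * mixSum G y θstar ≤ mixSum G y θ' := by
    have h := hlow
    rw [show Real.exp (-B₁) * (m * mixSum G y θstar)
        = m * (Real.exp (-B₁) * mixSum G y θstar) by ring] at h
    exact le_of_mul_le_mul_left h hm
  -- log bounds
  have hlogup : Real.log (mixSum G y θ') - Real.log (mixSum G y θstar)
      ≤ B₁ + M ^ 2 * Real.exp M := by
    have h1 : Real.log (mixSum G y θ')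
        ≤ Real.log (Real.exp B₁ * (1 + M ^ 2 * Real.exp M) * mixSum G y θstar) :=
      Real.log_le_log hS'pos hup'
    have hM1 : (0:ℝ) < 1 + M ^ 2 * Real.exp M := by positivity
    rw [Real.log_mul (by positivity) (ne_of_gt hSpos),
      Real.log_mul (Real.exp_ne_zero _) (ne_of_gt hM1), Real.log_exp] at h1
    have h2 : Real.log (1 + M ^ 2 * Real.exp M) ≤ M ^ 2 * Real.exp M := by
      have := Real.log_le_sub_one_of_pos hM1
      linarith
    linarith
  have hlogdown : Real.log (mixSum G y θstar) - Real.log (mixSum G y θ') ≤ B₁ := by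
    have h1 : Real.log (Real.exp (-B₁) * mixSum G y θstar) ≤ Real.log (mixSum G y θ') :=
      Real.log_le_log (by positivity) hlow'
    rw [Real.log_mul (Real.exp_ne_zero _) (ne_of_gt hSpos), Real.log_exp] at h1
    linarith
  have habs : |Real.log (mixSum G y θ') - Real.log (mixSum G y θstar)|
      ≤ B₁ + M ^ 2 * Real.exp M := by
    rw [abs_le]
    have : (0:ℝ) ≤ M ^ 2 * Real.exp M := by positivity
    constructor <;> linarith
  -- final numeric bound
  have hMle : M ≤ ‖y‖ + C := by
    calc M = (‖y‖ + C) * ‖w‖ := hMdef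
    _ ≤ (‖y‖ + C) * 1 := mul_le_mul_of_nonneg_left hw1 hyC0
    _ = ‖y‖ + C := mul_one _
  have heM : Real.exp M ≤ Real.exp (‖y‖ + C) := Real.exp_le_exp.mpr hMle
  have h7 : M ^ 2 ≤ (‖y‖ + C) ^ 2 * δ := by
    have hMsq : M ^ 2 = (‖y‖ + C) ^ 2 * ‖w‖ ^ 2 := by rw [hMdef]; ring
    rw [hMsq]
    exact mul_le_mul_of_nonneg_left hw2 (by positivity)
  have h8 : M ^ 2 * Real.exp M ≤ (‖y‖ + C) ^ 2 * δ * Real.exp (‖y‖ + C) :=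
    mul_le_mul h7 heM (Real.exp_pos _).le (by positivity)
  calc |Real.log (mixSum G y θ') - Real.log (mixSum G y θstar)|
      ≤ B₁ + M ^ 2 * Real.exp M := habs
  _ ≤ δ * ((‖y‖ + C) + 2 + (‖y‖ + C) ^ 2 * Real.exp (‖y‖ + C)) := by
      rw [hB₁def]; nlinarith [h8]

/- ==================== main theorem ==================== -/

/-- Envelope lemma. There are `δ₀ > 0` and a measurable `F` with
`∫ F² L(·,θ*) < ∞` such that for every `0 < δ ≤ δ₀` and every `θ`: if `g₀` minimizes
`‖gθ - θ*‖` over `G`, `v = H̄(g₀θ - θ*)`, `w = (I - H̄)(g₀θ - θ*)` and `‖v‖² + ‖w‖⁴ ≤ δ²`,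
then `|log L(y,θ) - log L(y,θ*)| ≤ δ F(y)` for all `y`. -/
theorem loglik_envelope {d : ℕ} (G : Subgroup (Iso d)) [Fintype G] (θstar : Euc d)
    (H : Subgroup (Iso d)) [Fintype H]
    (hH : ∀ g : Iso d, g ∈ H ↔ g ∈ G ∧ g θstar = θstar) :
    ∃ δ₀ > (0 : ℝ), ∃ F : Euc d → ℝ, Measurable F ∧
      Integrable (fun y : Euc d => F y ^ 2 * density G y θstar) ∧
      ∀ δ : ℝ, 0 < δ → δ ≤ δ₀ → ∀ θ : Euc d, ∀ g₀ : Iso d, g₀ ∈ G →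
        (∀ g : Iso d, g ∈ G → ‖g₀ θ - θstar‖ ≤ ‖g θ - θstar‖) →
        ‖groupAvg H (g₀ θ - θstar)‖ ^ 2 +
            ‖(g₀ θ - θstar) - groupAvg H (g₀ θ - θstar)‖ ^ 4 ≤ δ ^ 2 →
        ∀ y : Euc d,
          |Real.log (density G y θ) - Real.log (density G y θstar)| ≤ δ * F y := by
  classical
  set C : ℝ := ‖θstar‖ with hCdef
  have hC0 : 0 ≤ C := norm_nonneg _
  set F : Euc d → ℝ :=
    fun y => (‖y‖ + C) + 2 + (‖y‖ + C) ^ 2 * Real.exp (‖y‖ + C) with hFdef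
  have hFcont : Continuous F := by
    apply Continuous.add
    · exact (continuous_norm.add continuous_const).add continuous_const
    · exact ((continuous_norm.add continuous_const).pow 2).mul
        ((continuous_norm.add continuous_const).rexp)
  refine ⟨1, one_pos, F, hFcont.measurable, ?_, ?_⟩
  · -- Integrability
    have hne : Nonempty G := ⟨1⟩
    set c : ℝ := (1 / ((Fintype.card G : ℝ) * (2 * Real.pi) ^ ((d : ℝ) / 2))) with hcdef
    have heq : (fun y : Euc d => F y ^ 2 * density G y θstar)
        = fun y : Euc d => c * ∑ g : G,
            (F y ^ 2 * Real.exp (-‖y - (g : Iso d) θstar‖ ^ 2 / 2)) := by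
      funext y
      rw [density, ← hcdef, ← Finset.mul_sum]
      ring
    rw [heq]
    apply Integrable.const_mul
    apply integrable_finset_sum
    intro g _
    set μ : Euc d := (g : Iso d) θstar with hμdef
    have hKint : Integrable (fun y : Euc d => Real.exp (-(1/4) * ‖y‖ ^ 2)) := by
      have h := (GaussianFourier.integrable_cexp_neg_mul_sq_norm_add (V := Euc d)
        (b := (1/4 : ℂ)) (by norm_num) 0 0).norm
      have heq2 : (fun v : Euc d => Real.exp (-(1/4) * ‖v‖ ^ 2))
          = fun v : Euc d =>
            ‖Complex.exp (-(1/4 : ℂ) * (‖v‖ : ℂ) ^ 2 + 0 * ((inner ℝ (0 : Euc d) v : ℝ) : ℂ))‖ := by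
        funext v
        simp [Complex.norm_exp, ← Complex.ofReal_pow]
      rw [heq2]; exact h
    set K : ℝ := 16 * Real.exp (6 * C) * Real.exp ((6 + ‖μ‖) ^ 2) with hKdef
    have hfc : Continuous (fun y : Euc d => F y ^ 2 * Real.exp (-‖y - μ‖ ^ 2 / 2)) := by
      apply (hFcont.pow 2).mul
      exact ((((continuous_id.sub continuous_const).norm.pow 2).neg.div_const 2).rexp)
    apply Integrable.mono' (hKint.const_mul K) hfc.aestronglyMeasurable
    refine Filter.Eventually.of_forall (fun y => ?_)
    have ht : 0 ≤ ‖y‖ + C := by positivity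
    have hF0 : 0 ≤ F y := by rw [hFdef]; positivity
    have hexp0 : (0:ℝ) < Real.exp (-‖y - μ‖ ^ 2 / 2) := Real.exp_pos _
    have h1 : ‖y‖ + C ≤ Real.exp (‖y‖ + C) := by
      have := Real.add_one_le_exp (‖y‖ + C); linarith
    have h1e : (1:ℝ) ≤ Real.exp (‖y‖ + C) := Real.one_le_exp ht
    have he3 : Real.exp (‖y‖ + C) ^ 3 = Real.exp (3 * (‖y‖ + C)) := by
      rw [← Real.exp_nat_mul]; norm_num
    have hFle : F y ≤ 4 * Real.exp (3 * (‖y‖ + C)) := by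
      rw [← he3, hFdef]
      show ‖y‖ + C + 2 + (‖y‖ + C) ^ 2 * Real.exp (‖y‖ + C) ≤ 4 * Real.exp (‖y‖ + C) ^ 3
      have h2 : (‖y‖ + C) ^ 2 ≤ Real.exp (‖y‖ + C) ^ 2 := pow_le_pow_left₀ ht h1 2
      have h3 : (‖y‖ + C) ^ 2 * Real.exp (‖y‖ + C)
          ≤ Real.exp (‖y‖ + C) ^ 2 * Real.exp (‖y‖ + C) :=
        mul_le_mul_of_nonneg_right h2 (Real.exp_pos _).le
      have hcube : (1:ℝ) ≤ Real.exp (‖y‖ + C) ^ 3 := one_le_pow₀ h1e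
      have ht3 : ‖y‖ + C ≤ Real.exp (‖y‖ + C) ^ 3 := by nlinarith [h1, h1e]
      have h3' : (‖y‖ + C) ^ 2 * Real.exp (‖y‖ + C) ≤ Real.exp (‖y‖ + C) ^ 3 := by
        nlinarith [h3]
      linarith
    have hF2 : F y ^ 2 ≤ 16 * Real.exp (6 * (‖y‖ + C)) := by
      have := pow_le_pow_left₀ hF0 hFle 2
      calc F y ^ 2 ≤ (4 * Real.exp (3 * (‖y‖ + C))) ^ 2 := this
      _ = 16 * (Real.exp (3 * (‖y‖ + C)) * Real.exp (3 * (‖y‖ + C))) := by ring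
      _ = 16 * Real.exp (6 * (‖y‖ + C)) := by rw [← Real.exp_add]; ring_nf
    have hq : (‖y‖ - ‖μ‖) ^ 2 ≤ ‖y - μ‖ ^ 2 := by
      have h := abs_norm_sub_norm_le y μ
      calc (‖y‖ - ‖μ‖) ^ 2 = |‖y‖ - ‖μ‖| ^ 2 := (sq_abs _).symm
      _ ≤ ‖y - μ‖ ^ 2 := pow_le_pow_left₀ (abs_nonneg _) h 2
    have hEx : Real.exp (6 * (‖y‖ + C)) * Real.exp (-‖y - μ‖ ^ 2 / 2)
        ≤ Real.exp (6 * C) * Real.exp ((6 + ‖μ‖) ^ 2) * Real.exp (-(1/4) * ‖y‖ ^ 2) := by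
      rw [← Real.exp_add, ← Real.exp_add, ← Real.exp_add]
      apply Real.exp_le_exp.mpr
      nlinarith [hq, sq_nonneg (‖y‖ / 2 - (6 + ‖μ‖)), sq_nonneg ‖μ‖, norm_nonneg y,
        norm_nonneg μ]
    have hnorm : ‖F y ^ 2 * Real.exp (-‖y - μ‖ ^ 2 / 2)‖
        = F y ^ 2 * Real.exp (-‖y - μ‖ ^ 2 / 2) := by
      rw [Real.norm_eq_abs, abs_of_nonneg (by positivity)]
    rw [hnorm]
    calc F y ^ 2 * Real.exp (-‖y - μ‖ ^ 2 / 2)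
        ≤ (16 * Real.exp (6 * (‖y‖ + C))) * Real.exp (-‖y - μ‖ ^ 2 / 2) :=
          mul_le_mul_of_nonneg_right hF2 hexp0.le
    _ = 16 * (Real.exp (6 * (‖y‖ + C)) * Real.exp (-‖y - μ‖ ^ 2 / 2)) := by ring
    _ ≤ 16 * (Real.exp (6 * C) * Real.exp ((6 + ‖μ‖) ^ 2) * Real.exp (-(1/4) * ‖y‖ ^ 2)) :=
          mul_le_mul_of_nonneg_left hEx (by norm_num)
    _ = K * Real.exp (-(1/4) * ‖y‖ ^ 2) := by rw [hKdef]; ring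
  · -- main estimate
    intro δ hδ0 hδ1 θ g₀ hg₀ _hmin hsmall y
    set u : Euc d := g₀ θ - θstar with hu
    have hHG : ∀ h : Iso d, h ∈ H → h ∈ G := fun h hh => ((hH h).mp hh).1
    have hfix : ∀ h : H, (h : Iso d) θstar = θstar := fun h => ((hH _).mp h.2).2
    have hvfix : ∀ h : H, (h : Iso d) (groupAvg H u) = groupAvg H u :=
      fun h => mem_fix_groupAvg H h u
    have hwsum := sum_w_eq_zero H u
    have hw4 : ‖u - groupAvg H u‖ ^ 4 = (‖u - groupAvg H u‖ ^ 2) ^ 2 := by ring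
    have hv : ‖groupAvg H u‖ ≤ δ := by
      nlinarith [hsmall, pow_nonneg (norm_nonneg (u - groupAvg H u)) 4,
        norm_nonneg (groupAvg H u)]
    have hw2 : ‖u - groupAvg H u‖ ^ 2 ≤ δ := by
      nlinarith [hsmall, sq_nonneg ‖groupAvg H u‖, sq_nonneg (‖u - groupAvg H u‖ ^ 2),
        sq_nonneg ‖u - groupAvg H u‖]
    have hθ'eq : g₀ θ = θstar + groupAvg H u + (u - groupAvg H u) := by
      rw [hu]; abel
    have hkey := key_est G H hHG θstar hfix (groupAvg H u) (u - groupAvg H u)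
      hvfix hwsum δ hδ0 hδ1 hv hw2 y
    rw [log_density_sub, ← mixSum_mul_inv G y θ g₀ hg₀, hθ'eq]
    exact hkey
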